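/- Let G be a finite group, N a normal subgroup, and χ an irreducible character of G. Then there is a positive integer e and irreducible characters φ₁, ..., φ_n of N, all G-conjugate to one another, such that the restriction of χ to N equals e·(φ₁ + ⋯ + φ_n). -/

import Mathlib

open scoped Classical Pointwise

/-- `χ : G → ℂ` is an irreducible (complex) character of `G`. -/
def IsIrrChar (G : Type) [Group G] (χ : G → ℂ) : Prop :=
  ∃ V : FDRep ℂ G, CategoryTheory.Simple V ∧ χ = V.character

/-- A nonlinear irreducible character: irreducible of degree `> 1`. -/
def IsNonlinChar (G : Type) [Group G] (χ : G → ℂ) : Prop :=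
  IsIrrChar G χ ∧ 1 < (χ 1).re

/-- The conjugacy class of `g` in `G`. -/
def conjClass {G : Type*} [Group G] (g : G) : Set G := {x | IsConj g x}

/-- The character of `N` obtained by conjugating `φ` by `g`. -/
def conjChar {G : Type*} [Group G] (N : Subgroup G) (hN : N.Normal) (g : G)
    (φ : N → ℂ) : N → ℂ :=
  fun n => φ ⟨g * (n : G) * g⁻¹, hN.conj_mem (n : G) n.2 g⟩

set_option maxHeartbeats 1000000

open CategoryTheory Module

noncomputable section
namespace CliffordAux

variable {H : Type} [Group H]

def Inv (V : FDRep ℂ H) (p : Submodule ℂ V) : Prop := ∀ (g : H), ∀ v ∈ p, V.ρ g v ∈ p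

def subRep (V : FDRep ℂ H) (p : Submodule ℂ V) (hp : Inv V p) : FDRep ℂ H :=
  FDRep.of {
    toFun := fun g => (V.ρ g).restrict (fun x hx => hp g x hx)
    map_one' := by ext x; simp [LinearMap.restrict_apply]
    map_mul' := fun g h => by ext x; simp [LinearMap.restrict_apply] }

lemma subRep_ρ_apply (V : FDRep ℂ H) (p : Submodule ℂ V) (hp : Inv V p) (g : H) (x : p) :
    p.subtype ((subRep V p hp).ρ g x) = V.ρ g (p.subtype x) := rfl

def mkHom {A B : FDRep ℂ H} (u : A →ₗ[ℂ] B)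
    (hu : ∀ (g : H) (a : A), u (A.ρ g a) = B.ρ g (u a)) : A ⟶ B :=
  ⟨ConcreteCategory.ofHom u, fun g => by ext a; exact hu g a⟩

lemma mkHom_hom {A B : FDRep ℂ H} (u : A →ₗ[ℂ] B) (hu) : ConcreteCategory.hom (mkHom u hu).hom = u := rfl

lemma mkHom_ne_zero {A B : FDRep ℂ H} (u : A →ₗ[ℂ] B) (hu) (h : u ≠ 0) :
    mkHom u hu ≠ 0 :=
  fun h0 => h (congrArg (fun w => ConcreteCategory.hom w.hom) h0)

lemma hom_comm_apply' {A B : FDRep ℂ H} (f : A ⟶ B) (g : H) (a : A) :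
    f.hom (A.ρ g a) = B.ρ g (f.hom a) := by
  have := congrArg (fun (u : A.V ⟶ B.V) => u a) (f.comm g)
  exact this

lemma isoToLinearEquiv_coe {A B : FDRep ℂ H} (i : A ≅ B) :
    ⇑(FDRep.isoToLinearEquiv i) = ⇑(i.hom.hom) := rfl

lemma bijective_of_isIso {A B : FDRep ℂ H} (f : A ⟶ B) [IsIso f] :
    Function.Bijective f.hom := by
  have := (FDRep.isoToLinearEquiv (asIso f)).bijective
  rwa [isoToLinearEquiv_coe] at this

lemma isIso_of_bijective {A B : FDRep ℂ H} (f : A ⟶ B) (h : Function.Bijective f.hom) :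
    IsIso f := by
  let e : A ≃ₗ[ℂ] B := LinearEquiv.ofBijective (f.hom.hom.hom) h
  have : f = (Action.mkIso e.toFGModuleCatIso (fun g => f.comm g)).hom := by
    apply Action.hom_ext; rfl
  rw [this]; infer_instance

lemma finrank_pos_of_simple (A : FDRep ℂ H) [Simple A] : 0 < finrank ℂ A := by
  by_contra hn
  have h0 : finrank ℂ A = 0 := Nat.eq_zero_of_not_pos hn
  have : Subsingleton A := Module.finrank_zero_iff.mp h0
  apply CategoryTheory.id_nonzero A
  apply Action.hom_ext
  apply FGModuleCat.hom_ext
  apply LinearMap.ext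
  intro a
  exact @Subsingleton.elim _ this _ _

/-- The inclusion of an invariant subspace, as a morphism. -/
def subRepι (V : FDRep ℂ H) (p : Submodule ℂ V) (hp : Inv V p) : subRep V p hp ⟶ V :=
  mkHom p.subtype (fun g x => rfl)

instance subRepι_mono (V : FDRep ℂ H) (p : Submodule ℂ V) (hp : Inv V p) :
    Mono (subRepι V p hp) := by
  constructor
  intro Z u v huv
  apply Action.hom_ext
  apply FGModuleCat.hom_ext
  apply LinearMap.ext
  intro z
  have := congrArg (fun (w : Z ⟶ V) => w.hom z) huv
  simp only [Action.comp_hom] at this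
  exact Subtype.ext (show _ from this)

lemma simple_iff_inv (V : FDRep ℂ H) :
    Simple V ↔ (0 < finrank ℂ V ∧ ∀ p, Inv V p → p = ⊥ ∨ p = ⊤) := by
  constructor
  · intro hs
    refine ⟨finrank_pos_of_simple V, fun p hp => ?_⟩
    by_cases hbot : p = ⊥
    · exact Or.inl hbot
    right
    have hne : subRepι V p hp ≠ 0 := by
      obtain ⟨x, hx, hx0⟩ := (Submodule.ne_bot_iff p).mp hbot
      intro h0
      apply hx0
      have := congrArg (fun (w : subRep V p hp ⟶ V) => w.hom ⟨x, hx⟩) h0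
      exact this
    have hiso : IsIso (subRepι V p hp) := (Simple.mono_isIso_iff_nonzero _).mpr hne
    have hsurj := (bijective_of_isIso (subRepι V p hp)).2
    rw [Submodule.eq_top_iff']
    intro v
    obtain ⟨x, hx⟩ := hsurj v
    rw [← hx]; exact x.2
  · rintro ⟨hpos, hcrit⟩
    have : Nontrivial V := Module.nontrivial_of_finrank_pos hpos
    constructor
    intro Y f hm
    -- f is injective
    have hinj : Function.Injective f.hom := by
      rw [← LinearMap.ker_eq_bot]
      by_contra hker
      have hKinv : Inv Y (LinearMap.ker (f.hom.hom.hom)) := by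
        intro g v hv
        have hv0 : f.hom v = 0 := hv
        have : f.hom (Y.ρ g v) = 0 :=
          (hom_comm_apply' f g v).trans (by rw [hv0, map_zero])
        exact this
      have h0 : subRepι Y _ hKinv ≫ f = 0 ≫ f := by
        rw [Limits.zero_comp]
        apply Action.hom_ext
        apply FGModuleCat.hom_ext
        apply LinearMap.ext
        intro x
        exact x.2
      have := (cancel_mono f).mp h0
      apply hker
      rw [Submodule.eq_bot_iff]
      intro x hx
      have := congrArg (fun (w : subRep Y _ hKinv ⟶ Y) => w.hom ⟨x, hx⟩) this
      exact this
    have hrinv : Inv V (LinearMap.range (f.hom.hom.hom)) := by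
      rintro g v ⟨y, rfl⟩
      exact ⟨Y.ρ g y, (hom_comm_apply' f g y).symm ▸ rfl⟩
    rcases hcrit _ hrinv with hbot | htop
    · -- f = 0
      have hf0 : f = 0 := by
        apply Action.hom_ext
        apply FGModuleCat.hom_ext
        apply LinearMap.ext
        intro y
        have : f.hom y ∈ (⊥ : Submodule ℂ V) := hbot ▸ LinearMap.mem_range_self _ y
        exact (Submodule.mem_bot ℂ).mp this
      constructor
      · intro hiso hne
        have := (bijective_of_isIso f).2
        obtain ⟨v, hv⟩ := exists_ne (0 : V)
        obtain ⟨y, hy⟩ := this v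
        apply hv
        rw [← hy, hf0]
        rfl
      · intro hne
        exact absurd hf0 hne
    · have hb : Function.Bijective f.hom :=
        ⟨hinj, fun v => by
          have : v ∈ LinearMap.range (f.hom.hom.hom) := htop ▸ Submodule.mem_top
          exact this⟩
      constructor
      · intro _ h0
        obtain ⟨v, hv⟩ := exists_ne (0 : V)
        obtain ⟨y, hy⟩ := hb.2 v
        apply hv
        rw [← hy, h0]
        rfl
      · intro _
        exact isIso_of_bijective f hb

/-- Maschke: an equivariant projection onto an invariant subspace. -/
lemma equivProj [Fintype H] (V : FDRep ℂ H) (p : Submodule ℂ V) (hp : Inv V p) :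
    ∃ π : (V : Type) →ₗ[ℂ] V, (∀ v, π v ∈ p) ∧ (∀ v ∈ p, π v = v) ∧
      (∀ g v, π (V.ρ g v) = V.ρ g (π v)) := by
  obtain ⟨q0, hq0⟩ := Submodule.exists_isCompl p
  set π₀ : (V : Type) →ₗ[ℂ] p := p.linearProjOfIsCompl q0 hq0 with hπ₀
  set c : ℂ := (Fintype.card H : ℂ)⁻¹ with hc
  set π : (V : Type) →ₗ[ℂ] V :=
    c • ∑ h : H, (V.ρ h) ∘ₗ (p.subtype ∘ₗ π₀) ∘ₗ (V.ρ h⁻¹) with hπ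
  have happ : ∀ v, π v = c • ∑ h : H, V.ρ h ((π₀ (V.ρ h⁻¹ v) : V)) := by
    intro v
    simp [hπ, LinearMap.sum_apply]
  have hcard : (Fintype.card H : ℂ) ≠ 0 := Nat.cast_ne_zero.mpr Fintype.card_ne_zero
  refine ⟨π, ?_, ?_, ?_⟩
  · intro v
    rw [happ]
    refine Submodule.smul_mem _ _ (Submodule.sum_mem _ fun h _ => ?_)
    exact hp h _ (π₀ (V.ρ h⁻¹ v)).2
  · intro v hv
    rw [happ]
    have : ∀ h : H, V.ρ h ((π₀ (V.ρ h⁻¹ v) : V)) = v := by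
      intro h
      have hmem : V.ρ h⁻¹ v ∈ p := hp h⁻¹ v hv
      have : π₀ (V.ρ h⁻¹ v) = ⟨V.ρ h⁻¹ v, hmem⟩ :=
        Submodule.linearProjOfIsCompl_apply_left hq0 ⟨V.ρ h⁻¹ v, hmem⟩
      rw [this]
      show V.ρ h (V.ρ h⁻¹ v) = v
      rw [← Module.End.mul_apply, ← map_mul, mul_inv_cancel, map_one, Module.End.one_apply]
    rw [Finset.sum_congr rfl (fun h _ => this h), Finset.sum_const, Finset.card_univ]
    rw [← Nat.cast_smul_eq_nsmul ℂ, smul_smul, hc, inv_mul_cancel₀ hcard, one_smul]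
  · intro g v
    rw [happ, happ, Finset.smul_sum, Finset.smul_sum, map_sum]
    refine Fintype.sum_equiv (Equiv.mulLeft g⁻¹) _ _ ?_
    intro x
    simp only [Equiv.coe_mulLeft]
    rw [map_smul]
    congr 1
    have h1 : V.ρ (g⁻¹ * x)⁻¹ v = V.ρ x⁻¹ (V.ρ g v) := by
      rw [mul_inv_rev, inv_inv, map_mul, Module.End.mul_apply]
    rw [← h1, ← Module.End.mul_apply (V.ρ g), ← map_mul, mul_inv_cancel_left]

lemma char_add (V : FDRep ℂ H) (p q : Submodule ℂ V) (hp : Inv V p) (hq : Inv V q)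
    (hc : IsCompl p q) (g : H) :
    V.character g = (subRep V p hp).character g + (subRep V q hq).character g := by
  set e := Submodule.prodEquivOfIsCompl p q hc with he0
  have he : ∀ z : p × q, e z = (z.1 : V) + (z.2 : V) := by
    intro z
    show (e : p × q →ₗ[ℂ] V) z = _
    rw [Submodule.coe_prodEquivOfIsCompl, LinearMap.coprod_apply]
    rfl
  have hconj : V.ρ g =
      e.conj (LinearMap.prodMap ((subRep V p hp).ρ g) ((subRep V q hq).ρ g)) := by
    apply LinearMap.ext
    intro v
    rw [LinearEquiv.conj_apply]
    have : ∀ z : p × q,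
        (e.toLinearMap) ((LinearMap.prodMap ((subRep V p hp).ρ g) ((subRep V q hq).ρ g)) z)
          = V.ρ g (e z) := by
      intro z
      show e (((subRep V p hp).ρ g) z.1, ((subRep V q hq).ρ g) z.2) = _
      rw [he, he]
      show p.subtype ((subRep V p hp).ρ g z.1) + q.subtype ((subRep V q hq).ρ g z.2) = _
      rw [subRep_ρ_apply, subRep_ρ_apply, ← map_add]
      rfl
    show V.ρ g v = e.toLinearMap
      ((LinearMap.prodMap ((subRep V p hp).ρ g) ((subRep V q hq).ρ g)) (e.symm.toLinearMap v))
    rw [this (e.symm.toLinearMap v)]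
    congr 1
    exact (e.apply_symm_apply v).symm
  show LinearMap.trace ℂ _ (V.ρ g) = _
  rw [hconj, LinearMap.trace_conj']
  exact LinearMap.trace_prodMap' _ _


def HasDecomp (V : FDRep ℂ H) : Prop :=
  ∃ (k : ℕ) (S : Fin k → FDRep ℂ H) (ι : ∀ t, (S t : Type) →ₗ[ℂ] V)
    (π : ∀ t, (V : Type) →ₗ[ℂ] S t),
    (∀ t, Simple (S t)) ∧
    (∀ t (g : H) a, ι t ((S t).ρ g a) = V.ρ g (ι t a)) ∧
    (∀ t (g : H) v, π t (V.ρ g v) = (S t).ρ g (π t v)) ∧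
    (∀ t a, π t (ι t a) = a) ∧
    (∀ g : H, V.character g = ∑ t, (S t).character g)

lemma char_eq_zero_of_finrank_zero (V : FDRep ℂ H) (h0 : finrank ℂ V = 0) (g : H) :
    V.character g = 0 := by
  have hss : Subsingleton V := Module.finrank_zero_iff.mp h0
  have hzero : V.ρ g = 0 := by
    apply LinearMap.ext; intro v; exact @Subsingleton.elim _ hss _ _
  show LinearMap.trace ℂ _ (V.ρ g) = 0
  rw [hzero, map_zero]

lemma hasDecomp_of_finrank_zero (V : FDRep ℂ H) (h0 : finrank ℂ V = 0) : HasDecomp V := by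
  refine ⟨0, Fin.elim0, fun t => t.elim0, fun t => t.elim0, fun t => t.elim0,
    fun t => t.elim0, fun t => t.elim0, fun t => t.elim0, fun g => ?_⟩
  rw [char_eq_zero_of_finrank_zero V h0 g]
  simp

lemma hasDecomp [Fintype H] (V : FDRep ℂ H) : HasDecomp V := by
  suffices h : ∀ (d : ℕ) (V : FDRep ℂ H), finrank ℂ V ≤ d → HasDecomp V from h _ V le_rfl
  intro d
  induction d with
  | zero =>
    intro V hV
    exact hasDecomp_of_finrank_zero V (Nat.le_zero.mp hV)
  | succ d ih =>
    intro V hV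
    by_cases h0 : finrank ℂ V = 0
    · exact hasDecomp_of_finrank_zero V h0
    by_cases hs : Simple V
    · exact ⟨1, fun _ => V, fun _ => LinearMap.id, fun _ => LinearMap.id,
        fun _ => hs, fun _ _ _ => rfl, fun _ _ _ => rfl, fun _ _ => rfl,
        fun g => by rw [Fin.sum_univ_one]⟩
    have hpos : 0 < finrank ℂ V := Nat.pos_of_ne_zero h0
    have hns := hs
    rw [simple_iff_inv] at hns
    push_neg at hns
    obtain ⟨p, hpinv, hcases⟩ := hns hpos
    have hpbot : p ≠ ⊥ := fun h => by simp [h] at hcases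
    have hptop : p ≠ ⊤ := fun h => by simp [h] at hcases
    obtain ⟨π, hπmem, hπid, hπcomm⟩ := equivProj V p hpinv
    set πc : (V : Type) →ₗ[ℂ] p := LinearMap.codRestrict p π hπmem with hπc
    set q : Submodule ℂ (V : Type) := LinearMap.ker πc with hqdef
    have hπcapp : ∀ v, (πc v : (V : Type)) = π v := fun v => rfl
    have hmemq : ∀ v, v ∈ q ↔ π v = 0 := by
      intro v
      rw [hqdef, LinearMap.mem_ker]
      constructor
      · intro h; rw [← hπcapp, h]; rfl
      · intro h; exact Subtype.ext (by rw [hπcapp, h]; rfl)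
    have hcompl : IsCompl p q :=
      LinearMap.isCompl_of_proj (fun x => Subtype.ext (by rw [hπcapp]; exact hπid x x.2))
    have hqinv : Inv V q := by
      intro g v hv
      rw [hmemq] at hv ⊢
      rw [hπcomm, hv, map_zero]
    -- the projection onto q
    set πq : (V : Type) →ₗ[ℂ] V := LinearMap.id - π with hπqdef
    have hπqapp : ∀ v, πq v = v - π v := fun v => rfl
    have hπqmem : ∀ v, πq v ∈ q := by
      intro v
      rw [hmemq, hπqapp, map_sub, hπid (π v) (hπmem v), sub_self]
    have hπqid : ∀ v ∈ q, πq v = v := by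
      intro v hv
      rw [hπqapp, (hmemq v).mp hv, sub_zero]
    have hπqcomm : ∀ (g : H) v, πq (V.ρ g v) = V.ρ g (πq v) := by
      intro g v
      rw [hπqapp, hπqapp, map_sub, hπcomm]
    set πqc : (V : Type) →ₗ[ℂ] q := LinearMap.codRestrict q πq hπqmem with hπqc
    -- dimensions
    have hqtop : q ≠ ⊤ := by
      intro h
      obtain ⟨x, hx, hx0⟩ := (Submodule.ne_bot_iff p).mp hpbot
      apply hx0
      have : x ∈ q := h ▸ Submodule.mem_top
      rw [hmemq] at this
      rw [← hπid x hx, this]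
    have h1 : finrank ℂ (subRep V p hpinv : Type) ≤ d := by
      have := Submodule.finrank_lt (K := ℂ) (V := (V : Type)) hptop
      exact Nat.le_of_lt_succ (lt_of_lt_of_le this hV)
    have h2 : finrank ℂ (subRep V q hqinv : Type) ≤ d := by
      have := Submodule.finrank_lt (K := ℂ) (V := (V : Type)) hqtop
      exact Nat.le_of_lt_succ (lt_of_lt_of_le this hV)
    obtain ⟨k1, S1, ι1, π1, hs1, hι1, hπ1, hπι1, hchar1⟩ := ih (subRep V p hpinv) h1
    obtain ⟨k2, S2, ι2, π2, hs2, hι2, hπ2, hπι2, hchar2⟩ := ih (subRep V q hqinv) h2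
    set e := finSumFinEquiv (m := k1) (n := k2) with hedef
    set S' : Fin k1 ⊕ Fin k2 → FDRep ℂ H := Sum.elim S1 S2 with hS'
    set ι' : ∀ s, (S' s : Type) →ₗ[ℂ] (V : Type) := fun s =>
      match s with
      | .inl t => p.subtype ∘ₗ (ι1 t : (S1 t : Type) →ₗ[ℂ] p)
      | .inr t => q.subtype ∘ₗ (ι2 t : (S2 t : Type) →ₗ[ℂ] q) with hι'
    set π' : ∀ s, (V : Type) →ₗ[ℂ] (S' s : Type) := fun s =>
      match s with
      | .inl t => (π1 t : p →ₗ[ℂ] (S1 t : Type)) ∘ₗ πc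
      | .inr t => (π2 t : q →ₗ[ℂ] (S2 t : Type)) ∘ₗ πqc with hπ'
    have keyS : ∀ s, Simple (S' s) := by
      rintro (t1 | t2)
      · exact hs1 t1
      · exact hs2 t2
    have keyι : ∀ s (g : H) a, ι' s ((S' s).ρ g a) = V.ρ g (ι' s a) := by
      rintro (t1 | t2) g a
      · show p.subtype (ι1 t1 ((S1 t1).ρ g a)) = V.ρ g (p.subtype (ι1 t1 a))
        rw [hι1 t1 g a]
        exact subRep_ρ_apply V p hpinv g (ι1 t1 a)
      · show q.subtype (ι2 t2 ((S2 t2).ρ g a)) = V.ρ g (q.subtype (ι2 t2 a))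
        rw [hι2 t2 g a]
        exact subRep_ρ_apply V q hqinv g (ι2 t2 a)
    have keyπ : ∀ s (g : H) v, π' s (V.ρ g v) = (S' s).ρ g (π' s v) := by
      rintro (t1 | t2) g v
      · show π1 t1 (πc (V.ρ g v)) = (S1 t1).ρ g (π1 t1 (πc v))
        have hstep : πc (V.ρ g v) = (subRep V p hpinv).ρ g (πc v) :=
          Subtype.ext (by rw [hπcapp, hπcomm]; rfl)
        rw [hstep]; exact hπ1 t1 g (πc v)
      · show π2 t2 (πqc (V.ρ g v)) = (S2 t2).ρ g (π2 t2 (πqc v))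
        have hstep : πqc (V.ρ g v) = (subRep V q hqinv).ρ g (πqc v) :=
          Subtype.ext (by
            rw [show (πqc (V.ρ g v) : (V:Type)) = πq (V.ρ g v) from rfl, hπqcomm]; rfl)
        rw [hstep]; exact hπ2 t2 g (πqc v)
    have keyπι : ∀ s a, π' s (ι' s a) = a := by
      rintro (t1 | t2) a
      · show π1 t1 (πc (p.subtype (ι1 t1 a))) = a
        have hstep : πc (p.subtype (ι1 t1 a)) = ι1 t1 a :=
          Subtype.ext (by rw [hπcapp]; exact hπid _ (ι1 t1 a).2)
        rw [hstep]; exact hπι1 t1 a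
      · show π2 t2 (πqc (q.subtype (ι2 t2 a))) = a
        have hstep : πqc (q.subtype (ι2 t2 a)) = ι2 t2 a :=
          Subtype.ext (by
            rw [show (πqc _ : (V:Type)) = πq _ from rfl]; exact hπqid _ (ι2 t2 a).2)
        rw [hstep]; exact hπι2 t2 a
    refine ⟨k1 + k2, fun t => S' (e.symm t), fun t => ι' (e.symm t), fun t => π' (e.symm t),
      fun t => keyS (e.symm t), fun t => keyι (e.symm t), fun t => keyπ (e.symm t),
      fun t => keyπι (e.symm t), fun g => ?_⟩
    rw [char_add V p q hpinv hqinv hcompl g, hchar1 g, hchar2 g]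
    have ha : ∑ t1, (S1 t1).character g = ∑ t1, (S' (Sum.inl t1)).character g := rfl
    have hb : ∑ t2, (S2 t2).character g = ∑ t2, (S' (Sum.inr t2)).character g := rfl
    rw [ha, hb, ← Fintype.sum_sum_type (fun s => (S' s).character g),
      ← Equiv.sum_comp e.symm (fun s => (S' s).character g)]


lemma sum_char_simple [Fintype H] (A B : FDRep ℂ H) (hA : Simple A) (hB : Simple B) :
    ∑ x : H, A.character x * B.character x⁻¹
      = (Fintype.card H : ℂ) * (if Nonempty (A ≅ B) then 1 else 0) := by
  letI : Invertible ((Nat.card H : ℂ)) :=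
    invertibleOfNonzero (Nat.cast_ne_zero.mpr Nat.card_pos.ne')
  haveI := hA
  haveI := hB
  have horth := FDRep.char_orthonormal (k := ℂ) (G := H) A B
  have hcard : ((Nat.card H : ℂ)) ≠ 0 :=
    Nat.cast_ne_zero.mpr Nat.card_pos.ne'
  have h2 : ∑ g : H, A.character g * B.character g⁻¹
      = (Nat.card H : ℂ) * (if Nonempty (A ≅ B) then 1 else 0) := by
    rw [← horth, ← mul_assoc, mul_inv_cancel₀ hcard, one_mul]
  rw [h2, Nat.card_eq_fintype_card]

lemma char_eq_iff_iso [Fintype H] (A B : FDRep ℂ H) (hA : Simple A) (hB : Simple B) :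
    A.character = B.character ↔ Nonempty (A ≅ B) := by
  constructor
  · intro h
    have h1 := sum_char_simple A B hA hB
    have h2 := sum_char_simple B B hB hB
    rw [h] at h1
    by_contra hno
    rw [if_neg hno] at h1
    rw [h1, if_pos ⟨Iso.refl B⟩, mul_one, mul_zero] at h2
    exact Nat.cast_ne_zero.mpr (Fintype.card_ne_zero (α := H)) h2.symm
  · rintro ⟨i⟩
    exact FDRep.char_iso i


lemma sum_ite_mem_subgroup {G : Type} [Group G] [Fintype G] (N : Subgroup G) [Fintype ↥N]
    {M : Type} [AddCommMonoid M] (c : M) :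
    ∑ x : G, (if x ∈ N then c else 0) = (Fintype.card ↥N) • c := by
  have hc : Fintype.card ↥N = (Finset.univ.filter (fun x => x ∈ N)).card :=
    Fintype.card_of_subtype _ (by simp)
  rw [← Finset.sum_filter, Finset.sum_const, ← hc]

end CliffordAux

/-- conjugated character equals the character of the conjugated representation -/
lemma conj_core {G : Type} [Group G] [Fintype G] (N : Subgroup G) (hN : N.Normal)
    [Fintype ↥N]
    (V : FDRep ℂ G) (hV : CategoryTheory.Simple V)
    (Wi Wj : FDRep ℂ ↥N) (hWi : CategoryTheory.Simple Wi) (hWj : CategoryTheory.Simple Wj)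
    (f : (Wi : Type) →ₗ[ℂ] (V : Type)) (hf : f ≠ 0)
    (hfcomm : ∀ (m : ↥N) a, f (Wi.ρ m a) = V.ρ (↑m) (f a))
    (q : (V : Type) →ₗ[ℂ] (Wj : Type)) (hq : q ≠ 0)
    (hqcomm : ∀ (m : ↥N) v, q (V.ρ (↑m) v) = Wj.ρ m (q v)) :
    ∃ g : G, Wj.character = conjChar N hN g (Wi.character) := by
  classical
  open CliffordAux in
  set F' : (G → (Wi : Type)) →ₗ[ℂ] (V : Type) :=
    ∑ x : G, (V.ρ x⁻¹) ∘ₗ f ∘ₗ (LinearMap.proj x) with hF'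
  have hF'app : ∀ u, F' u = ∑ x : G, V.ρ x⁻¹ (f (u x)) := by
    intro u; rw [hF']; simp [LinearMap.sum_apply]
  set Ind : Submodule ℂ (G → (Wi : Type)) :=
    { carrier := {u | ∀ (m : ↥N) (x : G), u (↑m * x) = Wi.ρ m (u x)}
      add_mem' := fun {u} {v} hu hv => by
        intro m x; simp only [Pi.add_apply, hu m x, hv m x, map_add]
      zero_mem' := fun m x => by simp
      smul_mem' := fun c u hu => by intro m x; simp only [Pi.smul_apply, hu m x, map_smul] }
    with hInd
  have hF'equi : ∀ (g : G) (u : G → (Wi : Type)),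
      F' (fun x => u (x * g)) = V.ρ g (F' u) := by
    intro g u
    rw [hF'app, hF'app, map_sum]
    refine Fintype.sum_equiv (Equiv.mulRight g) _ _ ?_
    intro x
    simp only [Equiv.coe_mulRight]
    rw [← Module.End.mul_apply (V.ρ g), ← map_mul, mul_inv_rev, mul_inv_cancel_left]
  have hImagInv : CliffordAux.Inv V (Submodule.map F' Ind) := by
    rintro g v ⟨u, hu, rfl⟩
    refine ⟨fun x => u (x * g), fun m x => ?_, hF'equi g u⟩
    show u (↑m * x * g) = Wi.ρ m (u (x * g))
    rw [mul_assoc]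
    exact hu m (x * g)
  obtain ⟨w, hw⟩ : ∃ w, f w ≠ 0 := by
    by_contra hc; push_neg at hc
    exact hf (LinearMap.ext fun w => hc w)
  set uw : G → (Wi : Type) := fun x => if h : x ∈ N then Wi.ρ (⟨x, h⟩ : ↥N) w else 0 with huwdef
  have huw : uw ∈ Ind := by
    intro m x
    by_cases hx : x ∈ N
    · have hmx : (↑m * x) ∈ N := mul_mem m.2 hx
      rw [show uw (↑m * x) = Wi.ρ (⟨↑m * x, hmx⟩ : ↥N) w from dif_pos hmx,
        show uw x = Wi.ρ (⟨x, hx⟩ : ↥N) w from dif_pos hx,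
        show (⟨↑m * x, hmx⟩ : ↥N) = m * ⟨x, hx⟩ from rfl, map_mul, Module.End.mul_apply]
    · have hmx : (↑m * x) ∉ N := fun hc => hx (by
        have := mul_mem (inv_mem m.2) hc
        simpa [← mul_assoc] using this)
      rw [show uw (↑m * x) = 0 from dif_neg hmx, show uw x = 0 from dif_neg hx, map_zero]
  have hF'uw : F' uw = (Fintype.card ↥N) • f w := by
    rw [hF'app]
    have hterm : ∀ x : G, V.ρ x⁻¹ (f (uw x)) = if x ∈ N then f w else 0 := by
      intro x
      by_cases hx : x ∈ N
      · rw [if_pos hx, show uw x = Wi.ρ (⟨x, hx⟩ : ↥N) w from dif_pos hx,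
          hfcomm ⟨x, hx⟩ w, ← Module.End.mul_apply, ← map_mul]
        show V.ρ (x⁻¹ * x) (f w) = f w
        rw [inv_mul_cancel, map_one, Module.End.one_apply]
      · rw [if_neg hx, show uw x = 0 from dif_neg hx, map_zero, map_zero]
    rw [Finset.sum_congr rfl (fun x _ => hterm x)]
    exact CliffordAux.sum_ite_mem_subgroup N (f w)
  have hned : F' uw ≠ 0 := by
    rw [hF'uw, ← Nat.cast_smul_eq_nsmul ℂ]
    exact smul_ne_zero (Nat.cast_ne_zero.mpr Fintype.card_ne_zero) hw
  have hImagTop : Submodule.map F' Ind = ⊤ := by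
    rcases ((CliffordAux.simple_iff_inv V).mp hV).2 _ hImagInv with hb | ht
    · exfalso
      apply hned
      have hm : F' uw ∈ Submodule.map F' Ind := ⟨uw, huw, rfl⟩
      rw [hb] at hm
      simpa using hm
    · exact ht
  obtain ⟨vq, hvq⟩ : ∃ v, q v ≠ 0 := by
    by_contra hc; push_neg at hc
    exact hq (LinearMap.ext fun v => hc v)
  obtain ⟨u, hu, huv⟩ : ∃ u ∈ Ind, F' u = vq := by
    have hm : vq ∈ Submodule.map F' Ind := hImagTop ▸ Submodule.mem_top
    obtain ⟨u, hu, he⟩ := hm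
    exact ⟨u, hu, he⟩
  set J : G → ((Wi : Type) →ₗ[ℂ] (G → (Wi : Type))) := fun x =>
    LinearMap.pi (fun y => if h : y * x⁻¹ ∈ N then (Wi.ρ (⟨y * x⁻¹, h⟩ : ↥N)) else 0) with hJ
  have hJapp : ∀ x w' y, J x w' y
      = if h : y * x⁻¹ ∈ N then Wi.ρ (⟨y * x⁻¹, h⟩ : ↥N) w' else 0 := by
    intro x w' y
    rw [hJ]
    show (LinearMap.pi _) w' y = _
    rw [LinearMap.pi_apply]
    split_ifs with h
    · rfl
    · rfl
  have hJmem : ∀ x w', J x w' ∈ Ind := by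
    intro x w' m y
    have hiff : ↑m * y * x⁻¹ ∈ N ↔ y * x⁻¹ ∈ N := by
      constructor
      · intro hc
        have h2 := mul_mem (inv_mem m.2) hc
        simpa [← mul_assoc] using h2
      · intro hc
        have h2 := mul_mem m.2 hc
        simpa [← mul_assoc] using h2
    rw [hJapp, hJapp]
    by_cases h : y * x⁻¹ ∈ N
    · rw [dif_pos h, dif_pos (hiff.mpr h)]
      rw [show (⟨↑m * y * x⁻¹, hiff.mpr h⟩ : ↥N) = m * ⟨y * x⁻¹, h⟩
        from Subtype.ext (by simp [mul_assoc]), map_mul, Module.End.mul_apply]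
    · rw [dif_neg h, dif_neg (fun hc => h (hiff.mp hc)), map_zero]
  have hJsum : ∑ x : G, J x (u x) = (Fintype.card ↥N) • u := by
    funext y
    rw [Finset.sum_apply]
    have hterm : ∀ x : G, (J x (u x)) y = if y * x⁻¹ ∈ N then u y else 0 := by
      intro x
      rw [hJapp]
      by_cases h : y * x⁻¹ ∈ N
      · rw [dif_pos h, if_pos h]
        have h2 := hu ⟨y * x⁻¹, h⟩ x
        rw [← h2]
        congr 1
        exact inv_mul_cancel_right y x
      · rw [dif_neg h, if_neg h]
    rw [Finset.sum_congr rfl (fun x _ => hterm x)]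
    have : ((Fintype.card ↥N) • u) y = (Fintype.card ↥N) • u y := rfl
    rw [this]
    have heq : ∑ x : G, (if y * x⁻¹ ∈ N then u y else 0)
        = ∑ z : G, (if z ∈ N then u y else 0) := by
      refine Fintype.sum_equiv ⟨fun x => y * x⁻¹, fun z => z⁻¹ * y, ?_, ?_⟩ _ _ ?_
      · intro x; simp
      · intro z; simp
      · intro x; rfl
    rw [heq]
    exact CliffordAux.sum_ite_mem_subgroup N (u y)
  have hx0 : ∃ x : G, q (F' (J x (u x))) ≠ 0 := by
    by_contra hall
    push_neg at hall
    have hsum : ∑ x : G, q (F' (J x (u x))) = (Fintype.card ↥N) • q vq := by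
      rw [← map_sum q, ← map_sum F', hJsum, map_nsmul, map_nsmul, huv]
    rw [Finset.sum_congr rfl (fun x _ => hall x), Finset.sum_const_zero] at hsum
    rw [← Nat.cast_smul_eq_nsmul ℂ] at hsum
    exact smul_ne_zero (Nat.cast_ne_zero.mpr Fintype.card_ne_zero) hvq hsum.symm
  obtain ⟨x0, hx0⟩ := hx0
  set qx : (Wi : Type) →ₗ[ℂ] (Wj : Type) := q ∘ₗ F' ∘ₗ J x0 with hqx
  have hqxne : qx ≠ 0 := by
    intro h
    apply hx0
    rw [show q (F' (J x0 (u x0))) = qx (u x0) from rfl, h]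
    rfl
  set cHom : ↥N →* ↥N :=
    { toFun := fun m => ⟨x0 * ↑m * x0⁻¹, hN.conj_mem _ m.2 x0⟩
      map_one' := Subtype.ext (by simp)
      map_mul' := fun a b => Subtype.ext (by
        show x0 * (↑a * ↑b) * x0⁻¹ = (x0 * ↑a * x0⁻¹) * (x0 * ↑b * x0⁻¹)
        simp [mul_assoc]) } with hcHom
  set X : FDRep ℂ ↥N := FDRep.of (Wi.ρ.comp cHom) with hX
  have hXρ : ∀ m : ↥N, X.ρ m = Wi.ρ (cHom m) := fun m => rfl
  haveI hXsimple : CategoryTheory.Simple X := by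
    rw [CliffordAux.simple_iff_inv]
    constructor
    · exact ((CliffordAux.simple_iff_inv Wi).mp hWi).1
    · intro r hr
      have hri : CliffordAux.Inv Wi r := by
        intro m v hv
        have hm' : (x0⁻¹ * ↑m * x0) ∈ N := by
          have := hN.conj_mem _ m.2 x0⁻¹
          simpa using this
        have hmeq : Wi.ρ m = X.ρ ⟨x0⁻¹ * ↑m * x0, hm'⟩ := by
          rw [hXρ]
          congr 1
          refine Subtype.ext ?_
          show ↑m = x0 * (x0⁻¹ * ↑m * x0) * x0⁻¹
          simp [mul_assoc]
        rw [hmeq]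
        exact hr _ v hv
      exact ((CliffordAux.simple_iff_inv Wi).mp hWi).2 r hri
  have hqxcomm : ∀ (m : ↥N) (w' : (Wi : Type)), qx (X.ρ m w') = Wj.ρ m (qx w') := by
    intro m w'
    have hstep1 : J x0 (Wi.ρ (cHom m) w') = fun y => (J x0 w') (y * ↑m) := by
      funext y
      rw [hJapp, hJapp]
      have hiff : y * ↑m * x0⁻¹ ∈ N ↔ y * x0⁻¹ ∈ N := by
        constructor
        · intro hc
          have h2 := mul_mem hc (hN.conj_mem _ (inv_mem m.2) x0)
          simpa [mul_assoc] using h2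
        · intro hc
          have h2 := mul_mem hc (hN.conj_mem _ m.2 x0)
          simpa [mul_assoc] using h2
      by_cases h : y * x0⁻¹ ∈ N
      · rw [dif_pos h, dif_pos (hiff.mpr h)]
        rw [← Module.End.mul_apply, ← map_mul]
        congr 1
        congr 1
        refine Subtype.ext ?_
        show (y * x0⁻¹) * (x0 * ↑m * x0⁻¹) = y * ↑m * x0⁻¹
        simp [mul_assoc]
      · rw [dif_neg h, dif_neg (fun hc => h (hiff.mp hc))]
    show q (F' (J x0 (Wi.ρ (cHom m) w'))) = Wj.ρ m (q (F' (J x0 w')))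
    rw [hstep1, hF'equi (↑m) (J x0 w'), hqcomm]
  haveI := hWj
  have hiso : Nonempty (X ≅ Wj) := by
    have hne := CliffordAux.mkHom_ne_zero (A := X) (B := Wj) qx hqxcomm hqxne
    haveI := CategoryTheory.isIso_of_hom_simple hne
    exact ⟨CategoryTheory.asIso (CliffordAux.mkHom (A := X) (B := Wj) qx hqxcomm)⟩
  obtain ⟨iso⟩ := hiso
  have hchareq := FDRep.char_iso iso
  refine ⟨x0, ?_⟩
  funext m
  rw [← hchareq]
  rfl

theorem clifford_theorem (G : Type) [Group G] [Fintype G]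
    (N : Subgroup G) (hN : N.Normal) (χ : G → ℂ) (hχ : IsIrrChar G χ) :
    ∃ (e n : ℕ) (φ : Fin n → (N → ℂ)), 0 < e ∧ 0 < n ∧
      Function.Injective φ ∧
      (∀ i, IsIrrChar N (φ i)) ∧
      (∀ i j, ∃ g : G, φ j = conjChar N hN g (φ i)) ∧
      ∀ m : N, χ m = (e : ℂ) * ∑ i, φ i m := by
  classical
  obtain ⟨V, hV, hχV⟩ := hχ
  haveI := hV
  letI : Fintype ↥N := Fintype.ofFinite ↥N
  set R : FDRep ℂ ↥N := FDRep.of (V.ρ.comp N.subtype) with hR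
  have hRchar : ∀ m : ↥N, R.character m = χ (↑m) := by
    intro m; rw [hχV]; rfl
  obtain ⟨k, S, ι, π, hsimp, hιcomm, hπcomm, hπι, hchar⟩ := CliffordAux.hasDecomp R
  have hfrV : 0 < Module.finrank ℂ (V : Type) := CliffordAux.finrank_pos_of_simple V
  have hk : k ≠ 0 := by
    intro hk0
    subst hk0
    have h1 := hchar 1
    rw [Finset.univ_eq_empty, Finset.sum_empty] at h1
    have h2 : R.character 1 = (Module.finrank ℂ (V : Type) : ℂ) := FDRep.char_one R
    rw [h2] at h1
    exact Nat.cast_ne_zero.mpr hfrV.ne' h1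
  -- nontrivial elements of the constituents
  have hWnontriv : ∀ t, ∃ w : (S t : Type), w ≠ 0 := by
    intro t
    haveI := hsimp t
    have hpos := CliffordAux.finrank_pos_of_simple (S t)
    haveI : Nontrivial (S t : Type) := Module.nontrivial_of_finrank_pos hpos
    exact exists_ne 0
  -- all constituents are conjugate
  have conj_main : ∀ ti tj : Fin k,
      ∃ g : G, (S tj).character = conjChar N hN g ((S ti).character) := by
    intro ti tj
    obtain ⟨wi, hwi⟩ := hWnontriv ti
    obtain ⟨wj, hwj⟩ := hWnontriv tj
    refine conj_core N hN V hV (S ti) (S tj) (hsimp ti) (hsimp tj)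
      (ι ti) ?_ (fun m a => hιcomm ti m a) (π tj) ?_ (fun m v => hπcomm tj m v)
    · intro h0
      apply hwi
      rw [← hπι ti wi, show ι ti wi = 0 from by rw [h0]; rfl, map_zero]
    · intro h0
      apply hwj
      rw [← hπι tj wj, show π tj (ι tj wj) = 0 from by rw [h0]; rfl]
  -- the set of distinct constituent characters
  set Φ : Finset (↥N → ℂ) := Finset.image (fun t => (S t).character) Finset.univ with hΦ
  have hΦne : Φ.Nonempty :=
    ⟨(S ⟨0, Nat.pos_of_ne_zero hk⟩).character,
      Finset.mem_image_of_mem _ (Finset.mem_univ _)⟩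
  set n : ℕ := Φ.card with hn
  have hn0 : 0 < n := Finset.card_pos.mpr hΦne
  set φf : Fin n → (↥N → ℂ) := fun i => ((Φ.equivFin.symm i : {x // x ∈ Φ}) : ↥N → ℂ) with hφf
  have hφmem : ∀ i, φf i ∈ Φ := fun i => (Φ.equivFin.symm i).2
  have hexists : ∀ b ∈ Φ, ∃ t, (S t).character = b := by
    intro b hb
    obtain ⟨t, -, h⟩ := Finset.mem_image.mp hb
    exact ⟨t, h⟩
  have hφinj : Function.Injective φf := by
    intro i j hij
    exact Φ.equivFin.symm.injective (Subtype.ext hij)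
  set Mult : (↥N → ℂ) → ℕ :=
    fun b => (Finset.univ.filter (fun t => (S t).character = b)).card with hMult
  have hMpos : ∀ b ∈ Φ, 0 < Mult b := by
    intro b hb
    obtain ⟨t, ht⟩ := hexists b hb
    exact Finset.card_pos.mpr ⟨t, Finset.mem_filter.mpr ⟨Finset.mem_univ t, ht⟩⟩
  have hgroup : ∀ m : ↥N, R.character m = ∑ b ∈ Φ, (Mult b : ℂ) * b m := by
    intro m
    rw [hchar m, ← Finset.sum_fiberwise_of_maps_to (g := fun t => (S t).character)
      (fun t _ => Finset.mem_image_of_mem (fun t => (S t).character) (Finset.mem_univ t))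
      (fun t => (S t).character m)]
    apply Finset.sum_congr rfl
    intro b hb
    rw [Finset.sum_congr rfl (fun t ht =>
        by rw [(Finset.mem_filter.mp ht).2] : ∀ t ∈ _, (S t).character m = b m),
      Finset.sum_const, nsmul_eq_mul]
  -- the pairing
  set P : (↥N → ℂ) → ℂ := fun b => ∑ m : ↥N, R.character m * b m⁻¹ with hP
  have hPval : ∀ b ∈ Φ, P b = (Fintype.card ↥N : ℂ) * (Mult b : ℂ) := by
    intro b hb
    obtain ⟨tb, htb⟩ := hexists b hb
    have h1 : P b = ∑ t : Fin k, ∑ m : ↥N, (S t).character m * b m⁻¹ := by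
      rw [hP]
      calc ∑ m : ↥N, R.character m * b m⁻¹
          = ∑ m : ↥N, ∑ t : Fin k, (S t).character m * b m⁻¹ := by
            apply Finset.sum_congr rfl; intro m _; rw [hchar m, Finset.sum_mul]
        _ = _ := Finset.sum_comm
    have h2 : ∀ t : Fin k, ∑ m : ↥N, (S t).character m * b m⁻¹
        = (Fintype.card ↥N : ℂ) * (if (S t).character = b then 1 else 0) := by
      intro t
      rw [← htb, CliffordAux.sum_char_simple (S t) (S tb) (hsimp t) (hsimp tb)]
      congr 1
      exact if_congr (CliffordAux.char_eq_iff_iso (S t) (S tb) (hsimp t) (hsimp tb)).symm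
        rfl rfl
    rw [h1, Finset.sum_congr rfl (fun t _ => h2 t), ← Finset.mul_sum]
    congr 1
    rw [Finset.sum_boole]
  have hPconj : ∀ (g : G) (b : ↥N → ℂ), P (conjChar N hN g b) = P b := by
    intro g b
    set eN : ↥N ≃ ↥N :=
      { toFun := fun m => ⟨g⁻¹ * ↑m * g, by simpa using hN.conj_mem _ m.2 g⁻¹⟩
        invFun := fun m => ⟨g * ↑m * g⁻¹, hN.conj_mem _ m.2 g⟩
        left_inv := fun m => Subtype.ext (by
          show g * (g⁻¹ * ↑m * g) * g⁻¹ = ↑m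
          simp [mul_assoc])
        right_inv := fun m => Subtype.ext (by
          show g⁻¹ * (g * ↑m * g⁻¹) * g = ↑m
          simp [mul_assoc]) } with heN
    show ∑ m : ↥N, R.character m * conjChar N hN g b m⁻¹
        = ∑ m : ↥N, R.character m * b m⁻¹
    refine (Fintype.sum_equiv eN _ _ ?_).symm
    intro m
    have h1 : R.character (eN m) = R.character m := by
      show V.character (g⁻¹ * ↑m * g) = V.character ↑m
      have := FDRep.char_conj V (↑m) g⁻¹
      simpa using this
    have h2 : conjChar N hN g b ((eN m)⁻¹) = b m⁻¹ :=
      congrArg b (Subtype.ext (show g * ((g⁻¹ * ↑m * g)⁻¹) * g⁻¹ = (↑m)⁻¹ from by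
        simp [mul_inv_rev, mul_assoc]))
    rw [h1, h2]
  have hcNe : (Fintype.card ↥N : ℂ) ≠ 0 := Nat.cast_ne_zero.mpr Fintype.card_ne_zero
  have hMeq : ∀ b ∈ Φ, ∀ b' ∈ Φ, Mult b = Mult b' := by
    intro b hb b' hb'
    obtain ⟨tb, htb⟩ := hexists b hb
    obtain ⟨tb', htb'⟩ := hexists b' hb'
    obtain ⟨g, hg⟩ := conj_main tb tb'
    have hbb' : b' = conjChar N hN g b := by rw [← htb, ← htb']; exact hg
    have hPP : P b' = P b := by rw [hbb']; exact hPconj g b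
    rw [hPval b hb, hPval b' hb'] at hPP
    have := mul_left_cancel₀ hcNe hPP
    exact_mod_cast this.symm
  set e : ℕ := Mult (φf ⟨0, hn0⟩) with he
  have hepos : 0 < e := hMpos _ (hφmem _)
  refine ⟨e, n, φf, hepos, hn0, hφinj, ?_, ?_, ?_⟩
  · intro i
    obtain ⟨t, ht⟩ := hexists _ (hφmem i)
    exact ⟨S t, hsimp t, ht.symm⟩
  · intro i j
    obtain ⟨ti, hti⟩ := hexists _ (hφmem i)
    obtain ⟨tj, htj⟩ := hexists _ (hφmem j)
    obtain ⟨g, hg⟩ := conj_main ti tj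
    exact ⟨g, by rw [← hti, ← htj]; exact hg⟩
  · intro m
    rw [← hRchar m, hgroup m]
    have hterm : ∀ b ∈ Φ, (Mult b : ℂ) * b m = (e : ℂ) * b m := by
      intro b hb
      rw [he, hMeq b hb _ (hφmem ⟨0, hn0⟩)]
    rw [Finset.sum_congr rfl hterm, ← Finset.mul_sum]
    congr 1
    rw [← Finset.sum_coe_sort Φ (fun b => b m)]
    exact (Equiv.sum_comp Φ.equivFin.symm (fun x => (x : ↥N → ℂ) m)).symm
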